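/- Let L and K be N×N matrices. Then exp(ξ(H)) = [[e^{ξ(L)}, Σ_{n≥1} n tₙ L^{n−1} e^{ξ(L)} + [e^{ξ(L)}, K]],[0, e^{ξ(L)}]], where H = [[L, I+[L,K]],[0, L]] and ξ(A) := Σ_{n≥1} tₙ Aⁿ (a finite sum, i.e., only finitely many tₙ are nonzero). -/

import Mathlib

open Finset

namespace Stmt12Aux

open Matrix NormedSpace

variable {N : ℕ}

/-- The algebra hom `X ↦ fromBlocks X 0 0 X`. -/
def diagHom (N : ℕ) : Matrix (Fin N) (Fin N) ℂ →ₐ[ℂ] Matrix (Fin N ⊕ Fin N) (Fin N ⊕ Fin N) ℂ where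
  toFun X := Matrix.fromBlocks X 0 0 X
  map_one' := Matrix.fromBlocks_one
  map_mul' X Y := by
    simp only [Matrix.fromBlocks_multiply, Matrix.mul_zero, Matrix.zero_mul, add_zero, zero_add]
  map_zero' := by ext i j; cases i <;> cases j <;> simp
  map_add' X Y := by ext i j; cases i <;> cases j <;> simp
  commutes' r := by
    ext i j
    cases i <;> cases j <;>
      simp [Matrix.algebraMap_eq_diagonal, Matrix.diagonal_apply, Sum.inl.injEq, Sum.inr.injEq]

lemma exp_diagHom (A : Matrix (Fin N) (Fin N) ℂ) :
    exp (Matrix.fromBlocks A 0 0 A) = Matrix.fromBlocks (exp A) 0 0 (exp A) := by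
  letI : SeminormedRing (Matrix (Fin N) (Fin N) ℂ) := Matrix.linftyOpSemiNormedRing
  letI : NormedRing (Matrix (Fin N) (Fin N) ℂ) := Matrix.linftyOpNormedRing
  letI : NormedAlgebra ℂ (Matrix (Fin N) (Fin N) ℂ) := Matrix.linftyOpNormedAlgebra
  letI : SeminormedRing (Matrix (Fin N ⊕ Fin N) (Fin N ⊕ Fin N) ℂ) := Matrix.linftyOpSemiNormedRing
  letI : NormedRing (Matrix (Fin N ⊕ Fin N) (Fin N ⊕ Fin N) ℂ) := Matrix.linftyOpNormedRing
  letI : NormedAlgebra ℂ (Matrix (Fin N ⊕ Fin N) (Fin N ⊕ Fin N) ℂ) :=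
    Matrix.linftyOpNormedAlgebra
  letI : NormedAlgebra ℚ (Matrix (Fin N) (Fin N) ℂ) := Matrix.linftyOpNormedAlgebra
  letI : NormedAlgebra ℚ (Matrix (Fin N ⊕ Fin N) (Fin N ⊕ Fin N) ℂ) :=
    Matrix.linftyOpNormedAlgebra
  have hc : Continuous (diagHom N) := (diagHom N).toLinearMap.continuous_of_finiteDimensional
  exact (map_exp (diagHom N) hc A).symm

lemma exp_sq_zero (X : Matrix (Fin N ⊕ Fin N) (Fin N ⊕ Fin N) ℂ) (h : X * X = 0) :
    exp X = 1 + X := by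
  letI : SeminormedRing (Matrix (Fin N ⊕ Fin N) (Fin N ⊕ Fin N) ℂ) := Matrix.linftyOpSemiNormedRing
  letI : NormedRing (Matrix (Fin N ⊕ Fin N) (Fin N ⊕ Fin N) ℂ) := Matrix.linftyOpNormedRing
  letI : NormedAlgebra ℂ (Matrix (Fin N ⊕ Fin N) (Fin N ⊕ Fin N) ℂ) :=
    Matrix.linftyOpNormedAlgebra
  rw [exp_eq_tsum ℂ]
  dsimp only
  rw [tsum_eq_sum (s := {0, 1}) ?h]
  · norm_num
  · intro n hn
    simp only [Finset.mem_insert, Finset.mem_singleton] at hn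
    have h2 : 2 ≤ n := by omega
    have : X ^ n = 0 := by
      calc X ^ n = X * X * X ^ (n - 2) := by
            rw [← sq, ← pow_add]; congr 1; omega
        _ = 0 := by rw [h, zero_mul]
    simp [this]

lemma Hpow (L K : Matrix (Fin N) (Fin N) ℂ) (n : ℕ) :
    (Matrix.fromBlocks L (1 + (L * K - K * L)) 0 L) ^ (n + 1)
      = Matrix.fromBlocks (L ^ (n + 1))
          (((n + 1 : ℕ) : ℂ) • L ^ n + (L ^ (n + 1) * K - K * L ^ (n + 1)))
          0 (L ^ (n + 1)) := by
  induction n with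
  | zero => simp
  | succ n ih =>
    rw [pow_succ, ih, Matrix.fromBlocks_multiply]
    simp only [Matrix.zero_mul, Matrix.mul_zero, add_zero, zero_add]
    have htr : L ^ (n + 1) * (1 + (L * K - K * L))
          + (((n + 1 : ℕ) : ℂ) • L ^ n + (L ^ (n + 1) * K - K * L ^ (n + 1))) * L
        = ((n + 1 + 1 : ℕ) : ℂ) • L ^ (n + 1) + (L ^ (n + 1 + 1) * K - K * L ^ (n + 1 + 1)) := by
      push_cast
      rw [pow_succ, pow_succ]
      simp only [Matrix.mul_add, Matrix.add_mul, Matrix.mul_one, Matrix.sub_mul, Matrix.mul_sub,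
        add_smul, one_smul, smul_mul_assoc, ← Matrix.mul_assoc, ← pow_succ]
      rw [Matrix.mul_assoc K (L ^ (n + 1)) L, ← pow_succ]
      abel
    rw [htr, ← pow_succ]

lemma sum_fromBlocks {ι : Type*} (s : Finset ι) (f g h : ι → Matrix (Fin N) (Fin N) ℂ) :
    ∑ n ∈ s, Matrix.fromBlocks (f n) (g n) 0 (h n)
      = Matrix.fromBlocks (∑ n ∈ s, f n) (∑ n ∈ s, g n) 0 (∑ n ∈ s, h n) := by
  ext i j
  cases i <;> cases j <;> simp [Matrix.sum_apply]

end Stmt12Aux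

open Stmt12Aux Matrix NormedSpace in
/-- The exponential `exp(ξ(H))` for `H = [[L, I + [L,K]],[0, L]]`, where
`ξ(A) = Σ_{n=1}^{m} tₙ Aⁿ` (finitely many nonzero `tₙ`). -/
theorem stmt_12 {N : ℕ} (L K : Matrix (Fin N) (Fin N) ℂ)
    (t : ℕ → ℂ) (m : ℕ) (ht : ∀ n, m < n → t n = 0) :
    NormedSpace.exp
        (∑ n ∈ Finset.Icc 1 m, t n • (Matrix.fromBlocks L (1 + (L * K - K * L)) 0 L) ^ n)
      = Matrix.fromBlocks
          (NormedSpace.exp (∑ n ∈ Finset.Icc 1 m, t n • L ^ n))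
          ((∑ n ∈ Finset.Icc 1 m, ((n : ℂ) * t n) •
              (L ^ (n - 1) * NormedSpace.exp (∑ i ∈ Finset.Icc 1 m, t i • L ^ i)))
            + (NormedSpace.exp (∑ n ∈ Finset.Icc 1 m, t n • L ^ n) * K
                - K * NormedSpace.exp (∑ n ∈ Finset.Icc 1 m, t n • L ^ n)))
          0
          (NormedSpace.exp (∑ n ∈ Finset.Icc 1 m, t n • L ^ n)) := by
  set A : Matrix (Fin N) (Fin N) ℂ := ∑ n ∈ Finset.Icc 1 m, t n • L ^ n with hA
  set C : Matrix (Fin N) (Fin N) ℂ := ∑ n ∈ Finset.Icc 1 m, ((n : ℂ) * t n) • L ^ (n - 1)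
    with hC
  -- the commutation of A and C
  have hAC : Commute A C := by
    apply Commute.sum_left
    intro i _
    apply Commute.sum_right
    intro j _
    exact ((Commute.pow_pow_self L i (j - 1)).smul_left _).smul_right _
  -- Step 1 : ξ(H) as a block matrix
  have hxi : (∑ n ∈ Finset.Icc 1 m,
        t n • (Matrix.fromBlocks L (1 + (L * K - K * L)) 0 L) ^ n)
      = Matrix.fromBlocks A (C + (A * K - K * A)) 0 A := by
    have h1 : (∑ n ∈ Finset.Icc 1 m,
          t n • (Matrix.fromBlocks L (1 + (L * K - K * L)) 0 L) ^ n)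
        = ∑ n ∈ Finset.Icc 1 m, Matrix.fromBlocks (t n • L ^ n)
            (t n • (((n : ℕ) : ℂ) • L ^ (n - 1) + (L ^ n * K - K * L ^ n)))
            0 (t n • L ^ n) := by
      refine Finset.sum_congr rfl fun n hn => ?_
      have hn1 : 1 ≤ n := (Finset.mem_Icc.mp hn).1
      obtain ⟨k, rfl⟩ : ∃ k, n = k + 1 := ⟨n - 1, by omega⟩
      rw [Hpow]
      have : k + 1 - 1 = k := rfl
      rw [this, Matrix.fromBlocks_smul, smul_zero]
    have hTR : (∑ n ∈ Finset.Icc 1 m,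
          t n • (((n : ℕ) : ℂ) • L ^ (n - 1) + (L ^ n * K - K * L ^ n)))
        = C + (A * K - K * A) := by
      have key : ∀ n : ℕ, t n • (((n : ℕ) : ℂ) • L ^ (n - 1) + (L ^ n * K - K * L ^ n))
          = ((n : ℂ) * t n) • L ^ (n - 1) + ((t n • L ^ n) * K - K * (t n • L ^ n)) := by
        intro n
        simp only [smul_add, smul_sub, smul_smul, smul_mul_assoc, mul_smul_comm]
        rw [mul_comm]
      simp only [key]
      rw [Finset.sum_add_distrib, Finset.sum_sub_distrib, ← Finset.sum_mul, ← Finset.mul_sum,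
        ← hC, ← hA]
    rw [h1, sum_fromBlocks, hTR, ← hA]
  -- the conjugating unit
  set U : (Matrix (Fin N ⊕ Fin N) (Fin N ⊕ Fin N) ℂ)ˣ :=
    ⟨Matrix.fromBlocks 1 (-K) 0 1, Matrix.fromBlocks 1 K 0 1,
      by rw [Matrix.fromBlocks_multiply]; simp [Matrix.fromBlocks_one],
      by rw [Matrix.fromBlocks_multiply]; simp [Matrix.fromBlocks_one]⟩ with hU
  have hconj : Matrix.fromBlocks A (C + (A * K - K * A)) 0 A
      = (U : Matrix (Fin N ⊕ Fin N) (Fin N ⊕ Fin N) ℂ)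
          * Matrix.fromBlocks A C 0 A * ((U⁻¹ : _ˣ) : Matrix (Fin N ⊕ Fin N) (Fin N ⊕ Fin N) ℂ) := by
    rw [hU]
    simp only [Units.inv_mk]
    rw [Matrix.fromBlocks_multiply, Matrix.fromBlocks_multiply]
    simp only [Matrix.one_mul, Matrix.mul_one, Matrix.zero_mul, Matrix.mul_zero,
      Matrix.neg_mul, add_zero, zero_add]
    congr 1
    abel
  -- exponential of the middle block matrix
  have hmid : exp (Matrix.fromBlocks A C 0 A)
      = Matrix.fromBlocks (exp A) (exp A * C) 0 (exp A) := by
    have hD : Matrix.fromBlocks A C 0 A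
        = Matrix.fromBlocks A 0 0 A + Matrix.fromBlocks 0 C 0 0 := by
      ext i j; cases i <;> cases j <;> simp
    have hcomm : Commute (Matrix.fromBlocks A (0 : Matrix (Fin N) (Fin N) ℂ) 0 A)
        (Matrix.fromBlocks 0 C 0 0) := by
      unfold Commute SemiconjBy
      rw [Matrix.fromBlocks_multiply, Matrix.fromBlocks_multiply]
      simp [hAC.eq]
    have hN : exp (Matrix.fromBlocks (0 : Matrix (Fin N) (Fin N) ℂ) C 0 0)
        = 1 + Matrix.fromBlocks 0 C 0 0 :=
      exp_sq_zero _ (by rw [Matrix.fromBlocks_multiply]; simp)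
    rw [hD, Matrix.exp_add_of_commute _ _ hcomm, exp_diagHom, hN, Matrix.mul_add,
      Matrix.mul_one, Matrix.fromBlocks_multiply]
    ext i j; cases i <;> cases j <;> simp
  rw [hxi, hconj, Matrix.exp_units_conj, hmid, hU]
  simp only [Units.inv_mk]
  rw [Matrix.fromBlocks_multiply, Matrix.fromBlocks_multiply]
  simp only [Matrix.one_mul, Matrix.mul_one, Matrix.zero_mul, Matrix.mul_zero,
    Matrix.neg_mul, add_zero, zero_add]
  have hS : (∑ n ∈ Finset.Icc 1 m, ((n : ℂ) * t n) • (L ^ (n - 1) * exp A)) = C * exp A := by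
    rw [hC, Finset.sum_mul]
    exact Finset.sum_congr rfl fun n _ => (smul_mul_assoc _ _ _).symm
  have hCE : exp A * C = C * exp A := (hAC.exp_left).eq
  rw [hS, hCE]
  congr 1
  abel
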